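/- arXiv:1901.08464 — 2 statements merged into one kernel-verified Lean document; each statement's English description precedes it below -/
import Mathlib

section
/- If 𝒯 is an E-closed family of complete L-theories and e-Sp(𝒯) = n for some natural number n with 0 < n < ℵ₀, then 𝒯 can be represented as a disjoint union of n subfamilies 𝒯₁, …, 𝒯ₙ, each of which is e-categorical (has exactly one accumulation point). -/
open FirstOrder Language Cardinal Set

universe u v w

variable {L : FirstOrder.Language.{u, v}}

/-- A complete theory: a satisfiable set of sentences containing each sentence or its
negation (`Theory.IsMaximal` in Mathlib). -/
abbrev CTheory (L : FirstOrder.Language.{u, v}) : Type max u v :=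
  {T : L.Theory // T.IsMaximal}

/-- The neighbourhood `𝒯_φ = {T ∈ 𝒯 | φ ∈ T}`. -/
def nbhd (𝒯 : Set (CTheory L)) (φ : L.Sentence) : Set (CTheory L) :=
  {T | T ∈ 𝒯 ∧ φ ∈ T.1}

/-- `T` is an accumulation point of `𝒯` if for every sentence `φ ∈ T` the set `𝒯_φ` is
infinite. -/
def IsAccPoint (𝒯 : Set (CTheory L)) (T : CTheory L) : Prop :=
  ∀ φ : L.Sentence, φ ∈ T.1 → (nbhd 𝒯 φ).Infinite

/-- The `E`-closure of `𝒯`: `𝒯` together with all its accumulation points. -/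
def ClE (𝒯 : Set (CTheory L)) : Set (CTheory L) :=
  𝒯 ∪ {T | IsAccPoint 𝒯 T}

/-- The `e`-spectrum of `𝒯`: the cardinality of the set of accumulation points of `𝒯`. -/
noncomputable def eSp (𝒯 : Set (CTheory L)) : Cardinal :=
  Cardinal.mk {T : CTheory L // IsAccPoint 𝒯 T}

/-- Two sentences are inconsistent if `{φ, ψ}` is unsatisfiable. -/
def Inconsistent (φ ψ : L.Sentence) : Prop :=
  ¬ FirstOrder.Language.Theory.IsSatisfiable ({φ, ψ} : L.Theory)

open Classical in
/-- `RSge α 𝒯` says `RS(𝒯) ≥ α`: `RS(𝒯) ≥ 0` iff `𝒯 ≠ ∅`; `RS(𝒯) ≥ 1` iff `𝒯` is infinite;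
for `β ≥ 1`, `RS(𝒯) ≥ β + 1` iff there are pairwise inconsistent sentences `φ_n`, `n ∈ ℕ`,
with `RS(𝒯_{φ_n}) ≥ β` for all `n`; for limit `λ`, `RS(𝒯) ≥ λ` iff `RS(𝒯) ≥ β` for all
`β < λ`. -/
noncomputable def RSge (α : Ordinal.{w}) : Set (CTheory L) → Prop :=
  @Ordinal.limitRecOn (fun _ => Set (CTheory L) → Prop) α
    (fun 𝒯 => 𝒯.Nonempty)
    (fun β ih 𝒯 =>
      if β = 0 then 𝒯.Infinite
      else ∃ φ : ℕ → L.Sentence,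
        (∀ m n : ℕ, m ≠ n → Inconsistent (φ m) (φ n)) ∧ ∀ k : ℕ, ih (nbhd 𝒯 (φ k)))
    (fun β _ ih 𝒯 => ∀ γ : Ordinal, ∀ h : γ < β, ih γ h 𝒯)

/-- `RS(𝒯) = α` for an ordinal `α`: `RS(𝒯) ≥ α` but not `RS(𝒯) ≥ α + 1`. -/
def RSeq (𝒯 : Set (CTheory L)) (α : Ordinal.{w}) : Prop :=
  RSge α 𝒯 ∧ ¬ RSge (α + 1) 𝒯

/-- `RS(𝒯) = ∞`: `RS(𝒯) ≥ α` for every ordinal `α`. -/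
def RSinf (𝒯 : Set (CTheory L)) : Prop :=
  ∀ α : Ordinal.{w}, RSge α 𝒯

/-- `ds(𝒯) = n` (relative to `RS(𝒯) = α`): `n` is the largest natural number for which
there exist `n` pairwise inconsistent sentences `φ_1, …, φ_n` with `RS(𝒯_{φ_i}) = α`. -/
def dsEq (𝒯 : Set (CTheory L)) (α : Ordinal.{w}) (n : ℕ) : Prop :=
  IsGreatest {m : ℕ | ∃ φ : Fin m → L.Sentence,
    (∀ i j : Fin m, i ≠ j → Inconsistent (φ i) (φ j)) ∧
    ∀ i : Fin m, RSeq (nbhd 𝒯 (φ i)) α} n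

/-- `𝒯` is `e`-minimal: for every sentence `φ`, `𝒯_φ` is finite or `𝒯_{¬φ}` is finite. -/
def EMinimal (𝒯 : Set (CTheory L)) : Prop :=
  ∀ φ : L.Sentence, (nbhd 𝒯 φ).Finite ∨ (nbhd 𝒯 φ.not).Finite

/-- `𝒯` is `a`-minimal: `𝒯` has infinitely many accumulation points and for every sentence
`φ`, `𝒯_φ` or `𝒯_{¬φ}` has only finitely many accumulation points. -/
def AMinimal (𝒯 : Set (CTheory L)) : Prop :=
  {T : CTheory L | IsAccPoint 𝒯 T}.Infinite ∧
  ∀ φ : L.Sentence,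
    {T : CTheory L | IsAccPoint (nbhd 𝒯 φ) T}.Finite ∨
    {T : CTheory L | IsAccPoint (nbhd 𝒯 φ.not) T}.Finite

/-- `𝒯` is `α`-minimal: `RS(𝒯) = α` and for every sentence `φ`, `RS(𝒯_φ) < α` or
`RS(𝒯_{¬φ}) < α`. -/
def AlphaMinimal (𝒯 : Set (CTheory L)) (α : Ordinal.{w}) : Prop :=
  RSeq 𝒯 α ∧
  ∀ φ : L.Sentence, ¬ RSge α (nbhd 𝒯 φ) ∨ ¬ RSge α (nbhd 𝒯 φ.not)

/-! ### Auxiliary material -/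

/-- A model of a complete theory. -/
noncomputable def CTheory.model (T : CTheory L) : T.1.ModelType := T.2.1.some

lemma CTheory.mem_iff (T : CTheory L) (φ : L.Sentence) :
    φ ∈ T.1 ↔ T.model ⊨ φ := by
  constructor
  · intro h
    exact Theory.realize_sentence_of_mem T.1 h
  · intro h
    rcases T.2.mem_or_not_mem φ with h' | h'
    · exact h'
    · have hn : T.model ⊨ φ.not := Theory.realize_sentence_of_mem T.1 h'
      rw [Sentence.realize_not] at hn
      exact absurd h hn

lemma CTheory.not_mem_iff (T : CTheory L) (φ : L.Sentence) :
    φ.not ∈ T.1 ↔ φ ∉ T.1 := by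
  rw [CTheory.mem_iff, CTheory.mem_iff, Sentence.realize_not]

/-- Finite conjunction of a list of sentences. -/
def conjList : List L.Sentence → L.Sentence
  | [] => ⊤
  | ψ :: l => ψ ⊓ conjList l

lemma realize_conjList {M : Type*} [L.Structure M] (l : List L.Sentence) :
    M ⊨ conjList l ↔ ∀ ψ ∈ l, M ⊨ ψ := by
  induction l with
  | nil => simp [conjList, Sentence.Realize]
  | cons ψ l ih =>
    simp only [conjList, Sentence.Realize, Formula.realize_inf, List.mem_cons] at *
    constructor
    · rintro ⟨h1, h2⟩ χ (rfl | hχ)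
      · exact h1
      · exact ih.1 h2 χ hχ
    · intro h
      exact ⟨h ψ (Or.inl rfl), ih.2 fun χ hχ => h χ (Or.inr hχ)⟩

lemma mem_conjList (T : CTheory L) (l : List L.Sentence) :
    conjList l ∈ T.1 ↔ ∀ ψ ∈ l, ψ ∈ T.1 := by
  rw [CTheory.mem_iff, realize_conjList]
  exact forall_congr' fun ψ => imp_congr_right fun _ => (CTheory.mem_iff T ψ).symm

lemma exists_sep (T T' : CTheory L) (h : T ≠ T') : ∃ ψ : L.Sentence, ψ ∈ T.1 ∧ ψ ∉ T'.1 := by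
  have h1 : T.1 ≠ T'.1 := fun he => h (Subtype.ext he)
  by_cases hsub : T.1 ⊆ T'.1
  · have hex : ∃ ψ, ψ ∈ T'.1 ∧ ψ ∉ T.1 := by
      by_contra hc
      push_neg at hc
      exact h1 (hsub.antisymm hc)
    obtain ⟨ψ, h2, h3⟩ := hex
    refine ⟨ψ.not, (CTheory.not_mem_iff T ψ).2 h3, ?_⟩
    rw [CTheory.not_mem_iff]
    exact fun hc => hc h2
  · obtain ⟨ψ, h2, h3⟩ := Set.not_subset.1 hsub
    exact ⟨ψ, h2, h3⟩

/-- Proposition 1.5: any `E`-closed family `𝒯` with finite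
`e`-Sp(𝒯) = n > 0 is a disjoint union of `n` `e`-categorical families. -/
theorem eCategorical_partition (𝒯 : Set (CTheory L)) (hclosed : ClE 𝒯 = 𝒯)
    (n : ℕ) (hn : 0 < n) (hsp : eSp 𝒯 = n) :
    ∃ 𝒮 : Fin n → Set (CTheory L),
      (∀ i j : Fin n, i ≠ j → Disjoint (𝒮 i) (𝒮 j)) ∧
      (⋃ i : Fin n, 𝒮 i) = 𝒯 ∧
      ∀ i : Fin n, eSp (𝒮 i) = 1 := by
  classical
  -- enumerate the accumulation points
  obtain ⟨e⟩ := Cardinal.mk_eq_nat_iff.1 hsp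
  set Tt : Fin n → CTheory L := fun i => (e.symm i).1 with hTt
  have hTacc : ∀ i, IsAccPoint 𝒯 (Tt i) := fun i => (e.symm i).2
  have hTinj : Function.Injective Tt := fun i j h =>
    e.symm.injective (Subtype.ext h)
  have hacc_eq : ∀ T : CTheory L, IsAccPoint 𝒯 T → ∃ i, Tt i = T := by
    intro T hT
    exact ⟨e ⟨T, hT⟩, by simp [hTt]⟩
  -- separating sentences
  have hsepex : ∀ i j : Fin n, ∃ ψ : L.Sentence, i ≠ j → ψ ∈ (Tt i).1 ∧ ψ ∉ (Tt j).1 := by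
    intro i j
    by_cases hij : i = j
    · exact ⟨⊤, fun h => absurd hij h⟩
    · obtain ⟨ψ, h1, h2⟩ := exists_sep (Tt i) (Tt j) (fun he => hij (hTinj he))
      exact ⟨ψ, fun _ => ⟨h1, h2⟩⟩
  choose sep hsep using hsepex
  -- the sentence φf i isolating Tt i among the accumulation points
  set sep' : Fin n → Fin n → L.Sentence := fun i j => if i = j then ⊤ else sep i j with hsep'
  set φf : Fin n → L.Sentence := fun i => conjList ((List.finRange n).map (sep' i)) with hφf
  have htop : ∀ T : CTheory L, (⊤ : L.Sentence) ∈ T.1 := by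
    intro T
    rw [CTheory.mem_iff]
    simp [Sentence.Realize]
  have hφmem : ∀ i, φf i ∈ (Tt i).1 := by
    intro i
    rw [hφf, mem_conjList]
    intro ψ hψ
    simp only [List.mem_map, List.mem_finRange, true_and] at hψ
    obtain ⟨j, rfl⟩ := hψ
    rw [hsep']
    by_cases hij : i = j
    · simp [hij, htop]
    · simpa [hij] using (hsep i j hij).1
  have hφnotmem : ∀ i j, i ≠ j → φf i ∉ (Tt j).1 := by
    intro i j hij hc
    rw [hφf, mem_conjList] at hc
    have := hc (sep' i j) (List.mem_map.2 ⟨j, List.mem_finRange j, rfl⟩)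
    rw [hsep'] at this
    simp only [if_neg hij] at this
    exact (hsep i j hij).2 this
  -- partition function: first index whose sentence is in T, else the last index
  set lastI : Fin n := ⟨n - 1, by omega⟩ with hlastI
  set f : CTheory L → Fin n := fun T => (Fin.find? (fun j => decide (φf j ∈ T.1))).getD lastI with hf
  -- key facts about f
  have hfTt : ∀ i, f (Tt i) = i := by
    intro i
    have : Fin.find? (fun j => decide (φf j ∈ (Tt i).1)) = some i := by
      rw [Fin.find?_eq_some_iff]
      simp only [decide_eq_true_eq, decide_eq_false_iff_not]
      exact ⟨hφmem i, fun j hj => hφnotmem j i (ne_of_lt hj)⟩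
    simp [hf, this]
  have hf_mem : ∀ (T : CTheory L) (i : Fin n), f T = i → i ≠ lastI → φf i ∈ T.1 := by
    intro T i hfi hne
    rcases h : Fin.find? (fun j => decide (φf j ∈ T.1)) with _ | k
    · rw [hf] at hfi
      simp only [h, Option.getD_none] at hfi
      exact absurd hfi.symm hne
    · rw [hf] at hfi
      simp only [h, Option.getD_some] at hfi
      subst hfi
      exact of_decide_eq_true (Fin.find?_eq_some_iff.1 h).1
  have hf_notmem : ∀ (T : CTheory L) (i j : Fin n), f T = i → j < i → φf j ∉ T.1 := by
    intro T i j hfi hji hc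
    obtain ⟨k, hk⟩ := Option.isSome_iff_exists.1
      ((Fin.isSome_find?_iff (p := fun j => decide (φf j ∈ T.1))).2 ⟨j, decide_eq_true hc⟩)
    have hki : k = i := by
      rw [hf] at hfi
      simpa [hk] using hfi
    have hjk : j < k := hki ▸ hji
    exact absurd hc (of_decide_eq_false ((Fin.find?_eq_some_iff.1 hk).2 j hjk))
  -- the partition
  set 𝒮 : Fin n → Set (CTheory L) := fun i => {T | T ∈ 𝒯 ∧ f T = i} with h𝒮
  have h𝒮sub : ∀ i, 𝒮 i ⊆ 𝒯 := fun i T hT => hT.1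
  -- each Tt i is an accumulation point of 𝒮 i
  have haccS : ∀ i, IsAccPoint (𝒮 i) (Tt i) := by
    intro i χ hχ
    set l : List L.Sentence :=
      χ :: φf i :: ((List.finRange n).filter (fun j => decide (j < i))).map (fun j => (φf j).not)
      with hl
    have hψmem : conjList l ∈ (Tt i).1 := by
      rw [mem_conjList]
      intro ψ hψ
      rw [hl] at hψ
      simp only [List.mem_cons, List.mem_map, List.mem_filter, List.mem_finRange,
        true_and, decide_eq_true_eq] at hψ
      rcases hψ with rfl | rfl | ⟨j, hj, rfl⟩
      · exact hχ
      · exact hφmem i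
      · exact (CTheory.not_mem_iff _ _).2 (hφnotmem j i (ne_of_lt hj))
    have hsubset : nbhd 𝒯 (conjList l) ⊆ nbhd (𝒮 i) χ := by
      rintro T ⟨hT𝒯, hTψ⟩
      rw [mem_conjList] at hTψ
      have hχT : χ ∈ T.1 := hTψ χ (by rw [hl]; exact List.mem_cons_self)
      have hφiT : φf i ∈ T.1 := hTψ (φf i) (by rw [hl]; simp)
      have hφjT : ∀ j, j < i → φf j ∉ T.1 := by
        intro j hj
        have : (φf j).not ∈ T.1 := by
          refine hTψ (φf j).not ?_
          rw [hl]
          simp only [List.mem_cons, List.mem_map, List.mem_filter, List.mem_finRange,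
            true_and, decide_eq_true_eq]
          exact Or.inr (Or.inr ⟨j, hj, rfl⟩)
        exact (CTheory.not_mem_iff _ _).1 this
      have hfT : f T = i := by
        have : Fin.find? (fun j => decide (φf j ∈ T.1)) = some i := by
          rw [Fin.find?_eq_some_iff]
          simp only [decide_eq_true_eq, decide_eq_false_iff_not]
          exact ⟨hφiT, hφjT⟩
        simp [hf, this]
      exact ⟨⟨hT𝒯, hfT⟩, hχT⟩
    exact ((hTacc i) (conjList l) hψmem).mono hsubset
  -- accumulation points of 𝒮 i are exactly {Tt i}
  have haccset : ∀ i, {T : CTheory L | IsAccPoint (𝒮 i) T} = {Tt i} := by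
    intro i
    ext S
    simp only [Set.mem_setOf_eq, Set.mem_singleton_iff]
    constructor
    · intro hS
      have hS𝒯 : IsAccPoint 𝒯 S := fun χ hχ =>
        (hS χ hχ).mono fun T hT => ⟨h𝒮sub i hT.1, hT.2⟩
      obtain ⟨j, rfl⟩ := hacc_eq S hS𝒯
      by_contra hji'
      have hji : j ≠ i := fun he => hji' (congrArg Tt he)
      rcases lt_or_gt_of_ne hji with hlt | hgt
      · -- j < i : members of 𝒮 i don't contain φf j, but φf j ∈ Tt j
        have hempty : nbhd (𝒮 i) (φf j) = ∅ := by
          ext T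
          simp only [nbhd, Set.mem_setOf_eq, Set.mem_empty_iff_false, iff_false, not_and]
          rintro ⟨_, hfT⟩
          exact hf_notmem T i j hfT hlt
        have := hS (φf j) (hφmem j)
        rw [hempty] at this
        exact this Set.finite_empty
      · -- i < j : members of 𝒮 i contain φf i, but (φf i).not ∈ Tt j
        have hilast : i ≠ lastI := by
          intro he
          have : (j : ℕ) < n := j.2
          have : (i : ℕ) < (j : ℕ) := hgt
          rw [he] at this
          simp only [hlastI] at this
          omega
        have hempty : nbhd (𝒮 i) ((φf i).not) = ∅ := by
          ext T
          simp only [nbhd, Set.mem_setOf_eq, Set.mem_empty_iff_false, iff_false, not_and]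
          rintro ⟨_, hfT⟩ hc
          exact (CTheory.not_mem_iff _ _).1 hc (hf_mem T i hfT hilast)
        have hnotmem : (φf i).not ∈ (Tt j).1 :=
          (CTheory.not_mem_iff _ _).2 (hφnotmem i j (Ne.symm hji))
        have := hS ((φf i).not) hnotmem
        rw [hempty] at this
        exact this Set.finite_empty
    · rintro rfl
      exact haccS i
  refine ⟨𝒮, ?_, ?_, ?_⟩
  · intro i j hij
    rw [Set.disjoint_left]
    rintro T ⟨_, hTi⟩ ⟨_, hTj⟩
    exact hij (hTi ▸ hTj ▸ rfl)
  · apply Set.Subset.antisymm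
    · exact Set.iUnion_subset fun i => h𝒮sub i
    · intro T hT
      exact Set.mem_iUnion.2 ⟨f T, hT, rfl⟩
  · intro i
    have : {T : CTheory L // IsAccPoint (𝒮 i) T} ≃ ({Tt i} : Set (CTheory L)) :=
      Equiv.subtypeEquivRight fun T => by rw [← haccset i]; simp [Set.mem_setOf_eq]
    rw [eSp, Cardinal.mk_congr this, Cardinal.mk_singleton]
end

section
/- If the language L has at most countably many sentences, then for every family 𝒯 of complete L-theories either RS(𝒯) = ∞ or RS(𝒯) is a countable ordinal (RS(𝒯) < ω₁); that is, every e-totally transcendental family in an at most countable language has at most countable rank. -/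
open FirstOrder Language Cardinal Set

universe u v w

variable {L : FirstOrder.Language.{u, v}}

section Aux

variable {L : FirstOrder.Language.{u, v}}

lemma RSge_zero (𝒯 : Set (CTheory L)) : RSge (0 : Ordinal.{w}) 𝒯 ↔ 𝒯.Nonempty := by
  simp only [RSge, Ordinal.limitRecOn_zero]

lemma RSge_one (𝒯 : Set (CTheory L)) : RSge (1 : Ordinal.{w}) 𝒯 ↔ 𝒯.Infinite := by
  have : (1 : Ordinal.{w}) = Order.succ 0 := by simp
  rw [RSge, this, Ordinal.limitRecOn_succ]
  simp

lemma RSge_succ {β : Ordinal.{w}} (hβ : β ≠ 0) (𝒯 : Set (CTheory L)) :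
    RSge (β + 1) 𝒯 ↔ ∃ φ : ℕ → L.Sentence,
      (∀ m n : ℕ, m ≠ n → Inconsistent (φ m) (φ n)) ∧
      ∀ k : ℕ, RSge β (nbhd 𝒯 (φ k)) := by
  rw [RSge, Ordinal.add_one_eq_succ, Ordinal.limitRecOn_succ]
  simp only [if_neg hβ]
  rfl

lemma RSge_limit {β : Ordinal.{w}} (hβ : Order.IsSuccLimit β) (𝒯 : Set (CTheory L)) :
    RSge β 𝒯 ↔ ∀ γ < β, RSge γ 𝒯 := by
  rw [RSge, Ordinal.limitRecOn_limit _ _ _ _ hβ]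
  rfl

lemma nbhd_mono {𝒳 𝒴 : Set (CTheory L)} (h : 𝒳 ⊆ 𝒴) (φ : L.Sentence) :
    nbhd 𝒳 φ ⊆ nbhd 𝒴 φ := fun T hT => ⟨h hT.1, hT.2⟩

lemma RSge_mono_set : ∀ α : Ordinal.{w}, ∀ {𝒳 𝒴 : Set (CTheory L)}, 𝒳 ⊆ 𝒴 →
    RSge α 𝒳 → RSge α 𝒴 := by
  intro α
  induction α using Ordinal.induction with
  | _ α IH =>
    intro 𝒳 𝒴 hsub h
    rcases Ordinal.zero_or_succ_or_isSuccLimit α with rfl | ⟨β, rfl⟩ | hl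
    · rw [RSge_zero] at h ⊢
      exact h.mono hsub
    · rw [← Ordinal.add_one_eq_succ] at h ⊢
      by_cases hβ : β = 0
      · subst hβ
        rw [zero_add, RSge_one] at h ⊢
        exact h.mono hsub
      · rw [RSge_succ hβ] at h ⊢
        obtain ⟨φ, hinc, hk⟩ := h
        exact ⟨φ, hinc, fun k => IH β (Order.lt_succ β) (nbhd_mono hsub (φ k)) (hk k)⟩
    · rw [RSge_limit hl] at h ⊢
      exact fun γ hγ => IH γ hγ hsub (h γ hγ)

lemma RSge_mono_ord : ∀ β α : Ordinal.{w}, α ≤ β → ∀ 𝒳 : Set (CTheory L),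
    RSge β 𝒳 → RSge α 𝒳 := by
  intro β
  induction β using Ordinal.induction with
  | _ β IH =>
    intro α hαβ 𝒳 h
    rcases eq_or_lt_of_le hαβ with rfl | hlt
    · exact h
    · rcases Ordinal.zero_or_succ_or_isSuccLimit β with rfl | ⟨γ, rfl⟩ | hl
      · exact absurd hlt (not_lt_zero (a := α))
      · have hαγ : α ≤ γ := Order.lt_succ_iff.mp hlt
        have hγ : RSge γ 𝒳 := by
          by_cases hγ0 : γ = 0
          · subst hγ0
            have h1 : RSge (1 : Ordinal.{w}) 𝒳 := by
              rwa [show (1 : Ordinal.{w}) = Order.succ 0 by simp]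
            rw [RSge_zero]
            exact ((RSge_one 𝒳).mp h1).nonempty
          · rw [← Ordinal.add_one_eq_succ, RSge_succ hγ0] at h
            obtain ⟨φ, _, hk⟩ := h
            exact RSge_mono_set γ (fun T hT => hT.1) (hk 0)
        exact IH γ (Order.lt_succ γ) α hαγ 𝒳 hγ
      · exact (RSge_limit hl 𝒳).mp h α hlt

/-- The first uncountable ordinal, in universe `w`. -/
noncomputable abbrev omega1' : Ordinal.{w} := (Cardinal.aleph 1).ord

lemma omega1'_isLimit : Order.IsSuccLimit (omega1' : Ordinal.{w}) :=
  Cardinal.isSuccLimit_ord (Cardinal.aleph0_le_aleph 1)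

lemma lt_omega1'_of_card {α : Ordinal.{w}} (h : α.card ≤ ℵ₀) : α < omega1' := by
  rw [Cardinal.lt_ord, ← Cardinal.succ_aleph0, Order.lt_succ_iff]
  exact h

lemma card_le_of_lt_omega1' {α : Ordinal.{w}} (h : α < omega1') : α.card ≤ ℵ₀ := by
  rw [Cardinal.lt_ord, ← Cardinal.succ_aleph0, Order.lt_succ_iff] at h
  exact h

lemma key_split (hL : Cardinal.mk L.Sentence ≤ Cardinal.aleph0) (𝒳 : Set (CTheory L))
    (h : ∀ γ < (omega1' : Ordinal.{w}), RSge γ 𝒳) :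
    ∃ φ : ℕ → L.Sentence,
      (∀ m n : ℕ, m ≠ n → Inconsistent (φ m) (φ n)) ∧
      ∀ k : ℕ, ∀ γ < (omega1' : Ordinal.{w}), RSge γ (nbhd 𝒳 (φ k)) := by
  haveI : Countable L.Sentence := Cardinal.mk_le_aleph0_iff.mp hL
  haveI : Nonempty L.Sentence := ⟨⊥⟩
  obtain ⟨e, he⟩ := exists_surjective_nat L.Sentence
  classical
  set g : ℕ → Ordinal.{w} := fun n =>
    if hn : ∃ γ, γ < (omega1' : Ordinal.{w}) ∧ ¬ RSge γ (nbhd 𝒳 (e n)) then hn.choose else 0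
    with hg_def
  have hg : ∀ n, g n < (omega1' : Ordinal.{w}) := by
    intro n
    by_cases hn : ∃ γ, γ < (omega1' : Ordinal.{w}) ∧ ¬ RSge γ (nbhd 𝒳 (e n))
    · simp only [hg_def, dif_pos hn]
      exact hn.choose_spec.1
    · simp only [hg_def, dif_neg hn]
      exact omega1'_isLimit.pos
  have hθ : (⨆ n, g n) < (omega1' : Ordinal.{w}) := by
    apply Ordinal.iSup_lt_ord_lift _ hg
    rw [Cardinal.isRegular_aleph_one.cof_eq, Cardinal.mk_nat, Cardinal.lift_aleph0]
    exact Cardinal.aleph0_lt_aleph_one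
  set θ : Ordinal.{w} := ⨆ n, g n with hθ_def
  have hθ1 : θ + 1 < omega1' := omega1'_isLimit.succ_lt hθ
  have hθ2 : θ + 1 + 1 < omega1' := omega1'_isLimit.succ_lt hθ1
  have h2 := h (θ + 1 + 1) hθ2
  rw [RSge_succ (by exact fun hh => by simpa using congrArg Ordinal.card hh)] at h2
  obtain ⟨φ, hinc, hφ⟩ := h2
  refine ⟨φ, hinc, fun k γ hγ => ?_⟩
  by_contra hbad
  obtain ⟨n, hn⟩ := he (φ k)
  have hex : ∃ γ, γ < (omega1' : Ordinal.{w}) ∧ ¬ RSge γ (nbhd 𝒳 (e n)) :=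
    ⟨γ, hγ, by rwa [hn]⟩
  have hgn : ¬ RSge (g n) (nbhd 𝒳 (e n)) := by
    simp only [hg_def, dif_pos hex]
    exact hex.choose_spec.2
  apply hgn
  have hle : g n ≤ θ + 1 := le_trans (le_ciSup ⟨omega1', by
    rintro x ⟨m, rfl⟩; exact (hg m).le⟩ n) (le_of_lt (lt_add_one θ))
  rw [hn]
  exact RSge_mono_ord (θ + 1) (g n) hle _ (hφ k)

lemma RSge_all (hL : Cardinal.mk L.Sentence ≤ Cardinal.aleph0) :
    ∀ α : Ordinal.{w}, ∀ 𝒳 : Set (CTheory L),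
      (∀ γ < (omega1' : Ordinal.{w}), RSge γ 𝒳) → RSge α 𝒳 := by
  intro α
  induction α using Ordinal.induction with
  | _ α IH =>
    intro 𝒳 h
    rcases Ordinal.zero_or_succ_or_isSuccLimit α with rfl | ⟨β, rfl⟩ | hl
    · exact h 0 omega1'_isLimit.pos
    · rw [← Ordinal.add_one_eq_succ]
      by_cases hβ : β = 0
      · subst hβ
        rw [zero_add]
        exact h 1 (Ordinal.one_lt_of_isSuccLimit omega1'_isLimit)
      · obtain ⟨φ, hinc, hφ⟩ := key_split hL 𝒳 h
        rw [RSge_succ hβ]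
        exact ⟨φ, hinc, fun k => IH β (lt_add_one β) _ (hφ k)⟩
    · rw [RSge_limit hl]
      exact fun γ hγ => IH γ hγ 𝒳 h

end Aux

/-- Proposition 2.2: if the language has at most countably many sentences,
then for every family `𝒯` either `RS(𝒯) = ∞`, or `𝒯 = ∅` (`RS(𝒯) = -1`), or `RS(𝒯)` is a
countable ordinal. -/
theorem rank_countable_of_countable_language (𝒯 : Set (CTheory L))
    (hL : Cardinal.mk L.Sentence ≤ Cardinal.aleph0) :
    (∀ α : Ordinal.{w}, RSge α 𝒯) ∨ 𝒯 = ∅ ∨ ∃ α : Ordinal.{w}, α.card ≤ Cardinal.aleph0 ∧ RSeq 𝒯 α := by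
  by_cases hinf : ∀ α : Ordinal.{w}, RSge α 𝒯
  · exact Or.inl hinf
  by_cases hemp : 𝒯 = ∅
  · exact Or.inr (Or.inl hemp)
  push_neg at hinf
  set S : Set Ordinal.{w} := {α | ¬ RSge α 𝒯} with hS_def
  have hSne : S.Nonempty := hinf
  have hmem : sInf S ∈ S := csInf_mem hSne
  have hmin : ∀ γ < sInf S, RSge γ 𝒯 := by
    intro γ hγ
    by_contra hγ'
    exact absurd (csInf_le' (show γ ∈ S from hγ')) (not_le.mpr hγ)
  rcases Ordinal.zero_or_succ_or_isSuccLimit (sInf S) with h0 | ⟨β, hβ⟩ | hl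
  · rw [hS_def] at hmem
    rw [h0] at hmem
    rw [Set.mem_setOf_eq, RSge_zero] at hmem
    exact absurd (Set.nonempty_iff_ne_empty.mpr hemp) hmem
  · refine Or.inr (Or.inr ⟨β, ?_, ?_, ?_⟩)
    · by_contra hcard
      have hω : (omega1' : Ordinal.{w}) ≤ β := by
        by_contra hω
        exact hcard (card_le_of_lt_omega1' (not_le.mp hω))
      have hall : ∀ γ < (omega1' : Ordinal.{w}), RSge γ 𝒯 := by
        intro γ hγ
        apply hmin
        rw [← hβ]
        exact lt_of_lt_of_le (lt_of_lt_of_le hγ hω) (Order.le_succ β)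
      exact hmem (RSge_all hL (sInf S) 𝒯 hall)
    · apply hmin
      rw [← hβ]
      exact Order.lt_succ β
    · rw [hS_def, Set.mem_setOf_eq] at hmem
      rwa [← hβ, ← Ordinal.add_one_eq_succ] at hmem
  · exfalso
    apply hmem
    show RSge (sInf S) 𝒯
    rw [RSge_limit hl]
    exact hmin
end
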